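/- Wick's theorem / quadratic Grassmann–Plücker relation for Pfaffians: let z be a skew-symmetric n×n matrix over a commutative ring, and for each even subset B ⊆ [n] let Pf_B(z) be the Pfaffian of the principal submatrix indexed by B. For any subsets σ = {σ_1 < … < σ_r} and τ = {τ_1 < … < τ_s} of [n] with r, s odd, one has Σ_{i=1}^{s} (−1)^i Pf_{{τ_i}∪σ}(z) · Pf_{τ∖{τ_i}}(z) + Σ_{j=1}^{r} (−1)^j Pf_{σ∖{σ_j}}(z) · Pf_{{σ_j}∪τ}(z) = 0 (with appropriate sign conventions for reordering the index sets). -/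

import Mathlib

open Finset Matrix

/-- The "successor" of an index in `Fin m` (wrapping around; only used where it does not wrap). -/
def finSucc {m : ℕ} (i : Fin m) : Fin m := ⟨(i.val + 1) % m, Nat.mod_lt _ i.pos⟩

/-- The Pfaffian of an `m × m` matrix, defined as a sum over canonical representatives of
perfect matchings of `{0, …, m-1}` (for odd `m` there are none and the value is `0`;
for `m = 0` it is `1`). -/
def pf {R : Type*} [CommRing R] {m : ℕ} (M : Matrix (Fin m) (Fin m) R) : R :=
  ∑ σ ∈ Finset.univ.filter (fun σ : Equiv.Perm (Fin m) =>
      (∀ i : Fin m, i.val % 2 = 0 → σ i < σ (finSucc i)) ∧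
      (∀ i j : Fin m, i.val % 2 = 0 → j.val % 2 = 0 → i < j → σ i < σ j)),
    (Equiv.Perm.sign σ : ℤ) •
      ∏ i ∈ Finset.univ.filter (fun i : Fin m => i.val % 2 = 0), M (σ i) (σ (finSucc i))

/-- The Pfaffian of the principal submatrix of `M` with rows and columns indexed by `B`
(listed in increasing order). -/
def pfB {R : Type*} [CommRing R] {n : ℕ} (M : Matrix (Fin n) (Fin n) R)
    (B : Finset (Fin n)) : R :=
  pf (M.submatrix (B.orderEmbOfFin rfl) (B.orderEmbOfFin rfl))

/-- The sign `(-1)^{#{x ∈ S : x < a}}` incurred by moving `a` from the front of the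
index sequence `a, s_1, …, s_r` into its sorted position within `{a} ∪ S`. -/
def insSign {R : Type*} [CommRing R] {n : ℕ} (a : Fin n) (S : Finset (Fin n)) : R :=
  (-1 : R) ^ (S.filter (fun x => x < a)).card

def canon (m : ℕ) : Finset (Equiv.Perm (Fin m)) :=
  Finset.univ.filter (fun σ : Equiv.Perm (Fin m) =>
      (∀ i : Fin m, i.val % 2 = 0 → σ i < σ (finSucc i)) ∧
      (∀ i j : Fin m, i.val % 2 = 0 → j.val % 2 = 0 → i < j → σ i < σ j))

def evens (m : ℕ) : Finset (Fin m) := Finset.univ.filter (fun i : Fin m => i.val % 2 = 0)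

lemma pf_def {R : Type*} [CommRing R] {m : ℕ} (M : Matrix (Fin m) (Fin m) R) :
    pf M = ∑ σ ∈ canon m, (Equiv.Perm.sign σ : ℤ) •
      ∏ i ∈ evens m, M (σ i) (σ (finSucc i)) := rfl

lemma mem_canon {m : ℕ} (σ : Equiv.Perm (Fin m)) :
    σ ∈ canon m ↔ (∀ i : Fin m, i.val % 2 = 0 → σ i < σ (finSucc i)) ∧
      (∀ i j : Fin m, i.val % 2 = 0 → j.val % 2 = 0 → i < j → σ i < σ j) := by
  simp [canon]

lemma finSucc_eval {m : ℕ} (i : Fin m) (h : i.val + 1 < m) : finSucc i = ⟨i.val + 1, h⟩ := by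
  simp [finSucc, Nat.mod_eq_of_lt h]

lemma pf_fin_zero {R : Type*} [CommRing R] (M : Matrix (Fin 0) (Fin 0) R) : pf M = 1 := by
  rw [pf_def]
  have h : canon 0 = {1} := by
    apply Finset.eq_singleton_iff_unique_mem.mpr
    constructor
    · rw [mem_canon]; exact ⟨fun i => i.elim0, fun i => i.elim0⟩
    · intro σ _; exact Equiv.ext fun i => i.elim0
  rw [h]
  simp [evens]

section Gemb

def gemb (m : ℕ) (k : Fin (m+1)) (i : Fin m) : Fin (m+2) :=
  if (i : ℕ) < (k : ℕ) then ⟨i+1, by have := i.isLt; omega⟩ else ⟨i+2, by have := i.isLt; omega⟩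

lemma gemb_val (m : ℕ) (k : Fin (m+1)) (i : Fin m) :
    (gemb m k i : ℕ) = if (i:ℕ) < (k:ℕ) then (i:ℕ)+1 else (i:ℕ)+2 := by
  rw [gemb]; split <;> rfl

lemma gemb_lt_iff (m : ℕ) (k : Fin (m+1)) (a b : Fin m) :
    gemb m k a < gemb m k b ↔ a < b := by
  rw [Fin.lt_iff_val_lt_val, Fin.lt_iff_val_lt_val, gemb_val, gemb_val]
  split_ifs <;> omega

lemma gemb_val_ne_zero (m : ℕ) (k : Fin (m+1)) (i : Fin m) : 0 < (gemb m k i : ℕ) := by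
  rw [gemb_val]; split <;> omega

lemma gemb_val_ne_succ (m : ℕ) (k : Fin (m+1)) (i : Fin m) : (gemb m k i : ℕ) ≠ (k:ℕ)+1 := by
  rw [gemb_val]; split <;> omega

lemma gemb_strictMono (m : ℕ) (k : Fin (m+1)) : StrictMono (gemb m k) :=
  fun a b h => (gemb_lt_iff m k a b).mpr h

end Gemb

section Rho
open Equiv Equiv.Perm

def rho (m : ℕ) (k : Fin (m+1)) : Equiv.Perm (Fin (m+2)) :=
  (Fin.cycleRange ⟨(k:ℕ)+1, by have := k.isLt; omega⟩)⁻¹ * Equiv.swap 0 1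

lemma rho_zero (m : ℕ) (k : Fin (m+1)) : rho m k 0 = 0 := by
  rw [rho, Equiv.Perm.mul_apply, Equiv.swap_apply_left, Equiv.Perm.inv_eq_iff_eq]
  rw [Fin.cycleRange_of_lt (by simp [Fin.lt_iff_val_lt_val])]
  apply Fin.ext
  simp [Fin.val_add_one_of_lt, Fin.lt_iff_val_lt_val]

lemma rho_one (m : ℕ) (k : Fin (m+1)) :
    rho m k 1 = ⟨(k:ℕ)+1, by have := k.isLt; omega⟩ := by
  rw [rho, Equiv.Perm.mul_apply, Equiv.swap_apply_right, Equiv.Perm.inv_eq_iff_eq]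
  rw [Fin.cycleRange_self]

lemma rho_two (m : ℕ) (k : Fin (m+1)) (i : Fin m) :
    rho m k ⟨(i:ℕ)+2, by have := i.isLt; omega⟩ = gemb m k i := by
  have hne0 : (⟨(i:ℕ)+2, by have := i.isLt; omega⟩ : Fin (m+2)) ≠ 0 := by
    simp [Fin.ext_iff]
  have hne1 : (⟨(i:ℕ)+2, by have := i.isLt; omega⟩ : Fin (m+2)) ≠ 1 := by
    simp [Fin.ext_iff]
  rw [rho, Equiv.Perm.mul_apply, Equiv.swap_apply_of_ne_of_ne hne0 hne1,
    Equiv.Perm.inv_eq_iff_eq]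
  rcases lt_or_ge (i:ℕ) (k:ℕ) with h | h
  · rw [gemb, if_pos h, Fin.cycleRange_of_lt (Fin.mk_lt_mk.mpr (by omega))]
    apply Fin.ext
    rw [Fin.val_add_one_of_lt (show (⟨(i:ℕ)+1, by have := i.isLt; omega⟩ : Fin (m+2)) < ⟨m+1, by omega⟩
      from Fin.mk_lt_mk.mpr (by have := i.isLt; omega))]
  · rw [gemb, if_neg (by omega), Fin.cycleRange_of_gt (Fin.mk_lt_mk.mpr (by omega))]

lemma sign_rho (m : ℕ) (k : Fin (m+1)) :
    Equiv.Perm.sign (rho m k) = (-1 : ℤˣ)^(k:ℕ) := by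
  rw [rho, _root_.map_mul, map_inv, Fin.sign_cycleRange]
  rw [Equiv.Perm.sign_swap (by simp [Fin.ext_iff])]
  have h2 : (↑(⟨(k:ℕ)+1, by have := k.isLt; omega⟩ : Fin (m+2)) : ℕ) = (k:ℕ)+1 := rfl
  rw [← inv_pow, h2]
  have h1 : ((-1 : ℤˣ))⁻¹ = -1 := rfl
  rw [h1, pow_succ]
  simp

end Rho

section Phi
open Equiv Equiv.Perm

def iota (m : ℕ) : Fin m ≃ {j : Fin (m+2) // 2 ≤ (j : ℕ)} where
  toFun i := ⟨⟨(i:ℕ)+2, by have := i.isLt; omega⟩, by simp⟩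
  invFun j := ⟨(j.1 : ℕ) - 2, by have := j.1.isLt; have := j.2; omega⟩
  left_inv i := by apply Fin.ext; simp
  right_inv j := by
    apply Subtype.ext; apply Fin.ext
    have := j.2
    simp
    omega

def ext2 {m : ℕ} (σ' : Equiv.Perm (Fin m)) : Equiv.Perm (Fin (m+2)) :=
  σ'.extendDomain (iota m)

lemma ext2_zero {m : ℕ} (σ' : Equiv.Perm (Fin m)) : ext2 σ' 0 = 0 :=
  Equiv.Perm.extendDomain_apply_not_subtype _ _ (by simp)

lemma ext2_one {m : ℕ} (σ' : Equiv.Perm (Fin m)) : ext2 σ' 1 = 1 :=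
  Equiv.Perm.extendDomain_apply_not_subtype _ _ (by simp)

lemma ext2_two {m : ℕ} (σ' : Equiv.Perm (Fin m)) (i : Fin m) :
    ext2 σ' ⟨(i:ℕ)+2, by have := i.isLt; omega⟩ =
      ⟨((σ' i : Fin m):ℕ)+2, by have := (σ' i).isLt; omega⟩ := by
  exact Equiv.Perm.extendDomain_apply_image σ' (iota m) i

lemma sign_ext2 {m : ℕ} (σ' : Equiv.Perm (Fin m)) : sign (ext2 σ') = sign σ' :=
  Equiv.Perm.sign_extendDomain σ' (iota m)

def Phi (m : ℕ) (k : Fin (m+1)) (σ' : Equiv.Perm (Fin m)) : Equiv.Perm (Fin (m+2)) :=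
  rho m k * ext2 σ'

lemma Phi_zero (m : ℕ) (k : Fin (m+1)) (σ' : Equiv.Perm (Fin m)) : Phi m k σ' 0 = 0 := by
  rw [Phi, Equiv.Perm.mul_apply, ext2_zero, rho_zero]

lemma Phi_one (m : ℕ) (k : Fin (m+1)) (σ' : Equiv.Perm (Fin m)) :
    Phi m k σ' 1 = ⟨(k:ℕ)+1, by have := k.isLt; omega⟩ := by
  rw [Phi, Equiv.Perm.mul_apply, ext2_one, rho_one]

lemma Phi_two (m : ℕ) (k : Fin (m+1)) (σ' : Equiv.Perm (Fin m)) (i : Fin m) :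
    Phi m k σ' ⟨(i:ℕ)+2, by have := i.isLt; omega⟩ = gemb m k (σ' i) := by
  rw [Phi, Equiv.Perm.mul_apply, ext2_two, rho_two]

lemma sign_Phi (m : ℕ) (k : Fin (m+1)) (σ' : Equiv.Perm (Fin m)) :
    sign (Phi m k σ') = (-1 : ℤˣ)^(k:ℕ) * sign σ' := by
  rw [Phi, _root_.map_mul, sign_rho, sign_ext2]

end Phi

section Mem
open Equiv Equiv.Perm

lemma Phi_zero' (m : ℕ) (k : Fin (m+1)) (σ' : Equiv.Perm (Fin m)) (h : 0 < m+2) :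
    Phi m k σ' ⟨0, h⟩ = ⟨0, h⟩ := by
  have h0 : (0 : Fin (m+2)) = ⟨0, h⟩ := by apply Fin.ext; simp
  rw [← h0, Phi_zero]

lemma Phi_one' (m : ℕ) (k : Fin (m+1)) (σ' : Equiv.Perm (Fin m)) (h : 1 < m+2) :
    Phi m k σ' ⟨1, h⟩ = ⟨(k:ℕ)+1, by have := k.isLt; omega⟩ := by
  have h0 : (1 : Fin (m+2)) = ⟨1, h⟩ := by apply Fin.ext; simp
  rw [← h0, Phi_one]

lemma Phi_two' (m : ℕ) (k : Fin (m+1)) (σ' : Equiv.Perm (Fin m)) (v : ℕ) (hv : v < m)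
    (h2 : v + 2 < m + 2) :
    Phi m k σ' ⟨v+2, h2⟩ = gemb m k (σ' ⟨v, hv⟩) :=
  Phi_two m k σ' ⟨v, hv⟩

lemma phi_mem_iff (m : ℕ) (hm : Even m) (k : Fin (m+1)) (σ' : Equiv.Perm (Fin m)) :
    Phi m k σ' ∈ canon (m+2) ↔ σ' ∈ canon m := by
  have hm2 : m % 2 = 0 := Nat.even_iff.mp hm
  rw [mem_canon, mem_canon]
  constructor
  · rintro ⟨h1, h2⟩
    constructor
    · rintro ⟨v, hv⟩ hi
      simp only at hi
      have hv1 : v + 1 < m := by omega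
      rw [finSucc_eval _ (by omega : v + 1 < m)]
      have key := h1 ⟨v+2, by omega⟩ (by simp; omega)
      rw [finSucc_eval _ (by omega : (v+2) + 1 < m+2)] at key
      rw [Phi_two' m k σ' v (by omega) (by omega)] at key
      rw [show (⟨v+2+1, by omega⟩ : Fin (m+2)) = ⟨(v+1)+2, by omega⟩ from rfl] at key
      rw [Phi_two' m k σ' (v+1) hv1 (by omega)] at key
      exact (gemb_lt_iff m k _ _).mp key
    · rintro ⟨v, hv⟩ ⟨w, hw⟩ hiv hiw hvw
      simp only at hiv hiw
      rw [Fin.mk_lt_mk] at hvw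
      have key := h2 ⟨v+2, by omega⟩ ⟨w+2, by omega⟩ (by simp; omega) (by simp; omega)
        (Fin.mk_lt_mk.mpr (by omega))
      rw [Phi_two' m k σ' v hv (by omega), Phi_two' m k σ' w hw (by omega)] at key
      exact (gemb_lt_iff m k _ _).mp key
  · rintro ⟨h1, h2⟩
    constructor
    · rintro ⟨v, hv⟩ hi
      simp only at hi
      rcases Nat.lt_or_ge v 2 with h0 | h0
      · -- v = 0 or 1
        interval_cases v
        · -- v = 0 : Phi 0 = 0 < Phi 1 = k+1
          rw [finSucc_eval _ (by omega : (0:ℕ) + 1 < m+2)]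
          rw [Phi_zero' m k σ' (by omega), show (⟨0+1, by omega⟩ : Fin (m+2)) = ⟨1, by omega⟩ from rfl,
            Phi_one' m k σ' (by omega)]
          exact Fin.mk_lt_mk.mpr (by omega)
        · omega
      · obtain ⟨u, rfl⟩ : ∃ u, v = u + 2 := ⟨v - 2, by omega⟩
        have hu : u < m := by omega
        have hu1 : u + 1 < m := by omega
        rw [finSucc_eval _ (by omega : (u+2) + 1 < m+2)]
        rw [Phi_two' m k σ' u hu (by omega)]
        rw [show (⟨u+2+1, by omega⟩ : Fin (m+2)) = ⟨(u+1)+2, by omega⟩ from rfl]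
        rw [Phi_two' m k σ' (u+1) hu1 (by omega)]
        rw [gemb_lt_iff]
        have key := h1 ⟨u, hu⟩ (by simp; omega)
        rw [finSucc_eval _ (by omega : u + 1 < m)] at key
        exact key
    · rintro ⟨v, hv⟩ ⟨w, hw⟩ hiv hiw hvw
      simp only at hiv hiw
      rw [Fin.mk_lt_mk] at hvw
      rcases Nat.lt_or_ge v 2 with h0 | h0
      · interval_cases v
        · -- v = 0
          rcases Nat.lt_or_ge w 2 with hw0 | hw0
          · interval_cases w
            omega
          · obtain ⟨u, rfl⟩ : ∃ u, w = u + 2 := ⟨w - 2, by omega⟩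
            rw [Phi_zero' m k σ' (by omega), Phi_two' m k σ' u (by omega) (by omega)]
            rw [Fin.lt_iff_val_lt_val]
            exact gemb_val_ne_zero m k _
        · omega
      · obtain ⟨u, rfl⟩ : ∃ u, v = u + 2 := ⟨v - 2, by omega⟩
        obtain ⟨u', rfl⟩ : ∃ u', w = u' + 2 := ⟨w - 2, by omega⟩
        rw [Phi_two' m k σ' u (by omega) (by omega), Phi_two' m k σ' u' (by omega) (by omega)]
        rw [gemb_lt_iff]
        exact h2 ⟨u, by omega⟩ ⟨u', by omega⟩ (by simp; omega) (by simp; omega)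
          (Fin.mk_lt_mk.mpr (by omega))

lemma canon_fix0 (m : ℕ) (σ : Equiv.Perm (Fin (m+2))) (h : σ ∈ canon (m+2)) :
    σ 0 = 0 := by
  rw [mem_canon] at h
  by_contra hne
  have hst : σ (σ.symm 0) = 0 := σ.apply_symm_apply 0
  generalize hgen : σ.symm 0 = t at hst
  rcases t with ⟨tv, htv⟩
  have htv0 : tv ≠ 0 := by
    rintro rfl
    exact hne (by rw [show (0 : Fin (m+2)) = ⟨0, by omega⟩ from Fin.ext (by simp)]; exact hst)
  rcases Nat.even_or_odd tv with he | ho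
  · have key := h.2 ⟨0, by omega⟩ ⟨tv, htv⟩ (by simp) (by simp [Nat.even_iff.mp he])
      (Fin.mk_lt_mk.mpr (by omega))
    rw [hst] at key
    have : (σ ⟨0, by omega⟩).val < 0 := by
      have := Fin.lt_iff_val_lt_val.mp key
      simpa using this
    omega
  · have hodd : tv % 2 = 1 := Nat.odd_iff.mp ho
    have key := h.1 ⟨tv-1, by omega⟩ (by simp; omega)
    rw [finSucc_eval _ (by omega : (tv-1) + 1 < m+2)] at key
    rw [show (⟨tv-1+1, by omega⟩ : Fin (m+2)) = ⟨tv, htv⟩ from Fin.ext (by simp; omega)] at key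
    rw [hst] at key
    have : (σ ⟨tv-1, by omega⟩).val < 0 := by
      have := Fin.lt_iff_val_lt_val.mp key
      simpa using this
    omega

end Mem

section Expand
open Equiv Equiv.Perm
variable {R : Type*} [CommRing R]

lemma weight_Phi (m : ℕ) (hm : Even m) (k : Fin (m+1)) (σ' : Equiv.Perm (Fin m))
    (M : Matrix (Fin (m+2)) (Fin (m+2)) R) :
    ∏ i ∈ evens (m+2), M (Phi m k σ' i) (Phi m k σ' (finSucc i))
      = M ⟨0, by omega⟩ ⟨(k:ℕ)+1, by have := k.isLt; omega⟩ *
        ∏ i ∈ evens m, (M.submatrix (gemb m k) (gemb m k)) (σ' i) (σ' (finSucc i)) := by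
  have hm2 : m % 2 = 0 := Nat.even_iff.mp hm
  have h0mem : (⟨0, by omega⟩ : Fin (m+2)) ∈ evens (m+2) := by simp [evens]
  rw [← Finset.mul_prod_erase _ _ h0mem]
  congr 1
  · rw [finSucc_eval _ (by omega : (0:ℕ) + 1 < m+2), Phi_zero' m k σ' (by omega),
      show (⟨0+1, by omega⟩ : Fin (m+2)) = ⟨1, by omega⟩ from rfl,
      Phi_one' m k σ' (by omega)]
  · refine (Finset.prod_bij' (fun (i' : Fin m) (_ : i' ∈ evens m) => (⟨(i':ℕ)+2, by have := i'.isLt; omega⟩ : Fin (m+2)))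
      (fun (jj : Fin (m+2)) (hj : jj ∈ (evens (m+2)).erase ⟨0, by omega⟩) =>
        (⟨(jj:ℕ)-2, by
          have h1 := Finset.mem_erase.mp hj
          have h2 : (jj:ℕ) ≠ 0 := fun h => h1.1 (Fin.ext (by simpa using h))
          have h3 : (jj:ℕ) % 2 = 0 := by simpa [evens] using h1.2
          have := jj.isLt
          omega⟩ : Fin m))
      ?_ ?_ ?_ ?_ ?_).symm
    · intro a ha
      rw [Finset.mem_erase]
      constructor
      · intro hcon
        have := congrArg Fin.val hcon
        simp at this
      · simp [evens] at ha ⊢; omega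
    · intro b hb
      have hb' := Finset.mem_erase.mp hb
      have hbv : (b:ℕ) ≠ 0 := fun h => hb'.1 (Fin.ext (by simpa using h))
      simp [evens] at hb' ⊢
      omega
    · intro a ha; apply Fin.ext; simp
    · intro b hb
      have hb' := Finset.mem_erase.mp hb
      have hbv : (b:ℕ) ≠ 0 := fun h => hb'.1 (Fin.ext (by simpa using h))
      have hbe : (b:ℕ) % 2 = 0 := by simpa [evens] using hb'.2
      apply Fin.ext; simp; omega
    · intro a ha
      rcases a with ⟨v, hv⟩
      have hav : v % 2 = 0 := by simpa [evens] using ha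
      have hv1 : v + 1 < m := by omega
      rw [finSucc_eval _ hv1, finSucc_eval _ (by omega : v+2+1 < m+2)]
      rw [Phi_two' m k σ' v hv (by omega),
        show (⟨v+2+1, by omega⟩ : Fin (m+2)) = ⟨(v+1)+2, by omega⟩ from rfl,
        Phi_two' m k σ' (v+1) hv1 (by omega)]
      rfl

lemma pf_expand (m : ℕ) (hm : Even m) (M : Matrix (Fin (m+2)) (Fin (m+2)) R) :
    pf M = ∑ k : Fin (m+1),
      (-1:R)^(k:ℕ) * M ⟨0, by omega⟩ ⟨(k:ℕ)+1, by have := k.isLt; omega⟩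
        * pf (M.submatrix (gemb m k) (gemb m k)) := by
  rw [pf_def]
  simp only [pf_def, Finset.mul_sum]
  rw [← Finset.sum_product']
  refine (Finset.sum_bij (fun (p : Fin (m+1) × Equiv.Perm (Fin m)) (_ : p ∈ Finset.univ ×ˢ canon m) =>
    Phi m p.1 p.2) ?_ ?_ ?_ ?_).symm
  · intro p hp
    exact (phi_mem_iff m hm p.1 p.2).mpr (Finset.mem_product.mp hp).2
  · intro p1 hp1 p2 hp2 heq
    have hk : p1.1 = p2.1 := by
      have h1 := congrArg (fun σ => σ 1) heq
      simp only [Phi_one] at h1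
      exact Fin.ext (by have := congrArg Fin.val h1; simpa using this)
    have hσ : p1.2 = p2.2 := by
      apply Equiv.ext
      intro i
      have h2 := congrArg (fun σ => σ ⟨(i:ℕ)+2, by have := i.isLt; omega⟩) heq
      simp only [Phi_two] at h2
      rw [hk] at h2
      exact (gemb_strictMono m p2.1).injective h2
    exact Prod.ext hk hσ
  · intro σ hσ
    have h0 : σ 0 = 0 := canon_fix0 m σ hσ
    have h1ne : (σ 1 : ℕ) ≠ 0 := by
      intro h
      have : σ 1 = σ 0 := by rw [h0]; exact Fin.ext (by simpa using h)
      have := σ.injective this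
      have := congrArg Fin.val this
      simp at this
    have hkv : (σ 1 : ℕ) - 1 < m + 1 := by have := (σ 1).isLt; omega
    set k : Fin (m+1) := ⟨(σ 1 : ℕ) - 1, hkv⟩ with hkdef
    have hσ1 : σ 1 = ⟨(k:ℕ)+1, by have := k.isLt; omega⟩ := Fin.ext (by simp [hkdef]; omega)
    set ψ : Equiv.Perm (Fin (m+2)) := (rho m k)⁻¹ * σ with hψdef
    have hψ0 : ψ 0 = 0 := by
      rw [hψdef, Equiv.Perm.mul_apply, h0, Equiv.Perm.inv_eq_iff_eq]
      exact (rho_zero m k).symm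
    have hψ1 : ψ 1 = 1 := by
      rw [hψdef, Equiv.Perm.mul_apply, hσ1, ← rho_one m k]
      exact Equiv.symm_apply_apply _ _
    have hp : ∀ x : Fin (m+2), 2 ≤ (x:ℕ) ↔ 2 ≤ ((ψ x) : ℕ) := by
      intro x
      constructor
      · intro hx
        have hne0 : ψ x ≠ ψ 0 := fun h => by
          have := ψ.injective h
          rw [this] at hx
          simp at hx
        have hne1 : ψ x ≠ ψ 1 := fun h => by
          have := ψ.injective h
          rw [this] at hx
          norm_num at hx
        rw [hψ0] at hne0; rw [hψ1] at hne1
        have v0 : (ψ x : ℕ) ≠ 0 := fun h => hne0 (Fin.ext (by simpa using h))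
        have v1 : (ψ x : ℕ) ≠ 1 := fun h => hne1 (Fin.ext (by simpa using h))
        omega
      · intro hx
        by_contra hcon
        push_neg at hcon
        have : x = 0 ∨ x = 1 := by
          rcases x with ⟨xv, hxv⟩
          interval_cases xv
          · exact Or.inl (Fin.ext (by simp))
          · exact Or.inr (Fin.ext (by simp))
        rcases this with rfl | rfl
        · rw [hψ0] at hx; simp at hx
        · rw [hψ1] at hx; norm_num at hx
    set σ' : Equiv.Perm (Fin m) := Equiv.permCongr (iota m).symm (ψ.subtypePerm (fun x => (hp x).symm)) with hσ'def
    have hext : ext2 σ' = ψ := by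
      apply Equiv.ext
      intro x
      by_cases hx : 2 ≤ (x : ℕ)
      · rw [ext2, Equiv.Perm.extendDomain_apply_subtype σ' (iota m) (b := x) hx]
        simp [hσ'def, Equiv.permCongr_apply]
      · rw [ext2, Equiv.Perm.extendDomain_apply_not_subtype σ' (iota m) (b := x) hx]
        push_neg at hx
        have : x = 0 ∨ x = 1 := by
          rcases x with ⟨xv, hxv⟩
          interval_cases xv
          · exact Or.inl (Fin.ext (by simp))
          · exact Or.inr (Fin.ext (by simp))
        rcases this with rfl | rfl
        · exact hψ0.symm
        · exact hψ1.symm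
    have hPhi : Phi m k σ' = σ := by
      rw [Phi, hext, hψdef]
      exact mul_inv_cancel_left _ _
    exact ⟨(k, σ'), Finset.mem_product.mpr ⟨Finset.mem_univ _,
      (phi_mem_iff m hm k σ').mp (hPhi ▸ hσ)⟩, hPhi⟩
  · intro p hp
    rcases p with ⟨k, σ'⟩
    simp only
    rw [zsmul_eq_mul, zsmul_eq_mul, weight_Phi m hm k σ' M, sign_Phi]
    push_cast
    ring

end Expand


section ListLemmas
variable {α : Type*}

lemma eraseIdx_eraseIdx (l : List α) (k j : ℕ) (h : k ≤ j) :
    (l.eraseIdx k).eraseIdx j = (l.eraseIdx (j+1)).eraseIdx k := by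
  induction l generalizing k j with
  | nil => simp
  | cons a l ih =>
    cases k with
    | zero => simp [List.eraseIdx_cons_zero, List.eraseIdx_cons_succ]
    | succ k' =>
      cases j with
      | zero => omega
      | succ j' =>
        simp only [List.eraseIdx_cons_succ, List.cons.injEq, true_and]
        exact ih k' j' (by omega)

/-- erase two indices (of the original list) -/
def eI2 (l : List α) (u v : ℕ) : List α := (l.eraseIdx (max u v)).eraseIdx (min u v)

lemma eI2_comm (l : List α) (u v : ℕ) : eI2 l u v = eI2 l v u := by
  simp [eI2, max_comm, min_comm]

end ListLemmas

def sgn (R : Type*) [CommRing R] (k v : ℕ) : R :=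
  if v < k then (-1)^(k+v+1) else (-1)^(k+v)

lemma sgn_antisymm {R : Type*} [CommRing R] {k v : ℕ} (h : k ≠ v) :
    sgn R v k = - sgn R k v := by
  rcases h.lt_or_gt with h' | h' <;>
    simp [sgn, h', not_lt_of_gt h', h'.not_gt, pow_succ, add_comm v k]

lemma succAbove_val {m : ℕ} (p : Fin (m+1)) (i : Fin m) :
    ((p.succAbove i : Fin (m+1)) : ℕ) = if i.val < p.val then i.val else i.val + 1 := by
  rcases lt_or_ge (Fin.castSucc i) p with h | h
  · rw [Fin.succAbove_of_castSucc_lt _ _ h, Fin.coe_castSucc, if_pos (by simpa [Fin.lt_iff_val_lt_val] using h)]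
  · rw [Fin.succAbove_of_le_castSucc _ _ h, Fin.val_succ, if_neg (by simp [Fin.le_iff_val_le_val] at h; omega)]

section PfL
variable {R : Type*} [CommRing R] {n : ℕ} (z : Matrix (Fin n) (Fin n) R)

def pfL : List (Fin n) → R
  | [] => 1
  | a :: l => ∑ k : Fin l.length, (-1 : R) ^ (k : ℕ) * z a (l.get k) * pfL (l.eraseIdx k)
termination_by l => l.length
decreasing_by
  simp only [List.length_eraseIdx, List.length_cons]
  have := k.isLt
  split <;> omega

@[simp] lemma pfL_nil : pfL z [] = 1 := by simp [pfL]

lemma pfL_cons (a : Fin n) (l : List (Fin n)) :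
    pfL z (a :: l) = ∑ k : Fin l.length, (-1 : R) ^ (k : ℕ) * z a (l.get k) * pfL z (l.eraseIdx k) := by
  rw [pfL]

lemma pfL_cons_cons (x y : Fin n) (l : List (Fin n)) :
    pfL z (x :: y :: l) = z x y * pfL z l +
      ∑ k : Fin l.length, ∑ v ∈ Finset.univ.erase k,
        sgn R (k:ℕ) (v:ℕ) * (z x (l.get k) * z y (l.get v)) * pfL z (eI2 l (k:ℕ) (v:ℕ)) := by
  cases l with
  | nil => simp [pfL_cons]
  | cons c l₂ =>
    rw [pfL_cons]
    simp only [List.length_cons]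
    rw [Fin.sum_univ_succ]
    congr 1
    · simp
    refine Finset.sum_congr rfl (fun k _ => ?_)
    have hk : (k : ℕ) < l₂.length + 1 := k.isLt
    have herase : l₂.length = ((c :: l₂).eraseIdx (k:ℕ)).length := by
      rw [List.length_eraseIdx]
      simp only [List.length_cons, if_pos hk]
      omega
    have h2 : (y :: c :: l₂).eraseIdx ((k.succ : Fin (l₂.length+1+1)) : ℕ)
        = y :: (c :: l₂).eraseIdx (k : ℕ) := rfl
    rw [h2, pfL_cons, ← Fin.sum_congr' _ herase]
    rw [Finset.sum_erase_eq_sub (Finset.mem_univ k), Fin.sum_univ_succAbove _ k,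
        add_sub_cancel_left, Finset.mul_sum]
    refine Finset.sum_congr rfl (fun j _ => ?_)
    have hj : (j : ℕ) < l₂.length := j.isLt
    have hcast : ((Fin.cast herase j : Fin ((c :: l₂).eraseIdx (k:ℕ)).length) : ℕ) = (j : ℕ) := rfl
    have hget0 : ∀ (m : List (Fin n)) (i : Fin m.length), m.get i = m[(i:ℕ)] := fun m i => rfl
    rcases lt_or_ge (j : ℕ) (k : ℕ) with hlt | hle
    · have hsA : ((k.succAbove j : Fin (l₂.length+1)) : ℕ) = (j : ℕ) := by
        rw [succAbove_val, if_pos hlt]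
      have hgete : ((c :: l₂).eraseIdx (k:ℕ)).get (Fin.cast herase j) = (c :: l₂).get (k.succAbove j) := by
        rw [hget0, hget0]
        simp only [hcast, hsA]
        rw [List.getElem_eraseIdx, dif_pos hlt]
      have heI2 : ((c :: l₂).eraseIdx (k:ℕ)).eraseIdx ((Fin.cast herase j : Fin _) : ℕ)
          = eI2 (c :: l₂) (k:ℕ) ((k.succAbove j : Fin (l₂.length+1)) : ℕ) := by
        rw [eI2, hcast, hsA, Nat.max_eq_left hlt.le, Nat.min_eq_right hlt.le]
      have h1 : (y :: c :: l₂).get k.succ = (c :: l₂).get k := rfl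
      rw [hgete, heI2, hsA, sgn, if_pos hlt, hcast, h1]
      simp only [Fin.val_succ]
      ring
    · have hsA : ((k.succAbove j : Fin (l₂.length+1)) : ℕ) = (j : ℕ) + 1 := by
        rw [succAbove_val, if_neg (by omega)]
      have hgete : ((c :: l₂).eraseIdx (k:ℕ)).get (Fin.cast herase j) = (c :: l₂).get (k.succAbove j) := by
        rw [hget0, hget0]
        simp only [hcast, hsA]
        rw [List.getElem_eraseIdx, dif_neg (by omega)]
      have heI2 : ((c :: l₂).eraseIdx (k:ℕ)).eraseIdx ((Fin.cast herase j : Fin _) : ℕ)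
          = eI2 (c :: l₂) (k:ℕ) ((k.succAbove j : Fin (l₂.length+1)) : ℕ) := by
        rw [eI2, hcast, hsA, Nat.max_eq_right (by omega), Nat.min_eq_left (by omega)]
        exact eraseIdx_eraseIdx _ _ _ hle
      have h1 : (y :: c :: l₂).get k.succ = (c :: l₂).get k := rfl
      rw [hgete, heI2, hsA, sgn, if_neg (by omega), hcast, h1]
      simp only [Fin.val_succ]
      ring

end PfL

section Swap
open Matrix
variable {R : Type*} [CommRing R] {n : ℕ} (z : Matrix (Fin n) (Fin n) R)

lemma skew_apply (hz : zᵀ = -z) (x y : Fin n) : z x y = - z y x := by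
  have := congrFun (congrFun hz y) x
  simpa [Matrix.transpose_apply, Matrix.neg_apply] using this

lemma pfL_swap_head (hz : zᵀ = -z) (x y : Fin n) (l : List (Fin n)) :
    pfL z (x :: y :: l) = - pfL z (y :: x :: l) := by
  have hD : (∑ k : Fin l.length, ∑ v ∈ Finset.univ.erase k,
        sgn R (k:ℕ) (v:ℕ) * (z y (l.get k) * z x (l.get v)) * pfL z (eI2 l (k:ℕ) (v:ℕ)))
      = - ∑ k : Fin l.length, ∑ v ∈ Finset.univ.erase k,
        sgn R (k:ℕ) (v:ℕ) * (z x (l.get k) * z y (l.get v)) * pfL z (eI2 l (k:ℕ) (v:ℕ)) := by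
    rw [Finset.sum_comm' (t' := Finset.univ) (s' := fun v => Finset.univ.erase v)
        (fun a b => by simp [Finset.mem_erase, ne_comm])]
    rw [neg_eq_iff_eq_neg.symm, ← Finset.sum_neg_distrib]
    refine Finset.sum_congr rfl fun v _ => ?_
    rw [← Finset.sum_neg_distrib]
    refine Finset.sum_congr rfl fun k hk => ?_
    have hkv : (v:ℕ) ≠ (k:ℕ) := by
      have := (Finset.mem_erase.mp hk).1
      simpa [Fin.val_eq_val, ne_comm] using this
    rw [sgn_antisymm hkv, eI2_comm]
    ring
  rw [pfL_cons_cons, pfL_cons_cons, skew_apply z hz x y, hD]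
  ring

end Swap

section Swap2
open Matrix
variable {R : Type*} [CommRing R] {n : ℕ} (z : Matrix (Fin n) (Fin n) R)

lemma pfL_swap_mid_aux (hz : zᵀ = -z) (N : ℕ) :
    ∀ (u : List (Fin n)) (x y : Fin n) (w : List (Fin n)), (u ++ x :: y :: w).length ≤ N →
      pfL z (u ++ x :: y :: w) = - pfL z (u ++ y :: x :: w) := by
  induction N with
  | zero => intro u x y w h; simp at h
  | succ N ih =>
    intro u x y w hlen
    cases u with
    | nil => simpa using pfL_swap_head z hz x y w
    | cons c A =>
      rw [List.cons_append, List.cons_append, pfL_cons, pfL_cons]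
      have hT : (A ++ x :: y :: w).length = (A ++ y :: x :: w).length := by simp
      have hlenT1 : (A ++ x :: y :: w).length = A.length + w.length + 2 := by simp; omega
      have hp : A.length < (A ++ x :: y :: w).length := by omega
      have hq : A.length + 1 < (A ++ x :: y :: w).length := by omega
      set p : Fin (A ++ x :: y :: w).length := ⟨A.length, hp⟩ with hpdef
      set q : Fin (A ++ x :: y :: w).length := ⟨A.length + 1, hq⟩ with hqdef
      rw [← Finset.sum_neg_distrib]
      refine Fintype.sum_equiv ((Equiv.swap p q).trans (finCongr hT)) _ _ (fun k => ?_)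
      simp only [Equiv.trans_apply, finCongr_apply]
      by_cases hkp : k = p
      · subst hkp
        rw [Equiv.swap_apply_left]
        have e1 : (A ++ x :: y :: w).get p = x := by
          rw [List.get_eq_getElem, List.getElem_append_right (le_refl _)]
          simp
        have e2 : (A ++ y :: x :: w).get (Fin.cast hT q) = x := by
          rw [List.get_eq_getElem, List.getElem_append_right (by simp [hqdef])]
          simp [hqdef]
        have e3 : (A ++ x :: y :: w).eraseIdx (p : ℕ) = A ++ y :: w := by
          rw [hpdef, List.eraseIdx_append_of_length_le (le_refl _)]; simp
        have e4 : (A ++ y :: x :: w).eraseIdx ((Fin.cast hT q : Fin _) : ℕ) = A ++ y :: w := by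
          rw [show ((Fin.cast hT q : Fin _) : ℕ) = A.length + 1 from rfl,
            List.eraseIdx_append_of_length_le (by omega)]
          simp [Nat.add_sub_cancel_left]
        rw [e1, e2, e3, e4, show ((Fin.cast hT q : Fin _) : ℕ) = A.length + 1 from rfl,
          show ((p : Fin _) : ℕ) = A.length from rfl]
        ring
      · by_cases hkq : k = q
        · subst hkq
          rw [Equiv.swap_apply_right]
          have e1 : (A ++ x :: y :: w).get q = y := by
            rw [List.get_eq_getElem, List.getElem_append_right (by simp [hqdef])]
            simp [hqdef, Nat.add_sub_cancel_left]
          have e2 : (A ++ y :: x :: w).get (Fin.cast hT p) = y := by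
            rw [List.get_eq_getElem, List.getElem_append_right (by simp [hpdef])]
            simp [hpdef]
          have e3 : (A ++ x :: y :: w).eraseIdx ((q : Fin _) : ℕ) = A ++ x :: w := by
            rw [show ((q : Fin _) : ℕ) = A.length + 1 from rfl,
              List.eraseIdx_append_of_length_le (by omega)]
            simp [Nat.add_sub_cancel_left]
          have e4 : (A ++ y :: x :: w).eraseIdx ((Fin.cast hT p : Fin _) : ℕ) = A ++ x :: w := by
            rw [show ((Fin.cast hT p : Fin _) : ℕ) = A.length from rfl,
              List.eraseIdx_append_of_length_le (le_refl _)]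
            simp
          rw [e1, e2, e3, e4, show ((Fin.cast hT p : Fin _) : ℕ) = A.length from rfl,
            show ((q : Fin _) : ℕ) = A.length + 1 from rfl]
          ring
        · rw [Equiv.swap_apply_of_ne_of_ne hkp hkq]
          have hkv : ((Fin.cast hT k : Fin _) : ℕ) = (k : ℕ) := rfl
          have hne1 : (k : ℕ) ≠ A.length := fun h => hkp (Fin.ext h)
          have hne2 : (k : ℕ) ≠ A.length + 1 := fun h => hkq (Fin.ext h)
          rcases lt_or_ge (k : ℕ) A.length with hlt | hge
          · have e1 : (A ++ x :: y :: w).get k = A[(k:ℕ)] := by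
              rw [List.get_eq_getElem, List.getElem_append_left hlt]
            have e2 : (A ++ y :: x :: w).get (Fin.cast hT k) = A[(k:ℕ)] := by
              rw [List.get_eq_getElem]
              exact List.getElem_append_left hlt
            have e3 : (A ++ x :: y :: w).eraseIdx (k : ℕ) = A.eraseIdx (k:ℕ) ++ x :: y :: w :=
              List.eraseIdx_append_of_lt_length hlt _
            have e4 : (A ++ y :: x :: w).eraseIdx ((Fin.cast hT k : Fin _) : ℕ)
                = A.eraseIdx (k:ℕ) ++ y :: x :: w :=
              List.eraseIdx_append_of_lt_length hlt _
            have hih := ih (A.eraseIdx (k:ℕ)) x y w (by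
              simp only [List.length_append, List.length_eraseIdx, List.length_cons] at hlen ⊢
              rw [if_pos hlt]
              omega)
            rw [e1, e2, e3, e4, hkv, hih]
            ring
          · have hge2 : A.length + 2 ≤ (k : ℕ) := by omega
            obtain ⟨d, hd⟩ : ∃ d, (k : ℕ) = A.length + (d + 2) := ⟨(k:ℕ) - A.length - 2, by omega⟩
            have hdw : d < w.length := by
              have := k.isLt
              omega
            have e1 : (A ++ x :: y :: w).get k = w[d] := by
              rw [List.get_eq_getElem, List.getElem_append_right (by omega)]
              simp only [hd, Nat.add_sub_cancel_left]
              rfl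
            have e2 : (A ++ y :: x :: w).get (Fin.cast hT k) = w[d] := by
              have h5 : (A ++ y :: x :: w)[(k:ℕ)]'(by rw [← hT]; exact k.isLt) = w[d] := by
                rw [List.getElem_append_right (by omega)]
                simp only [hd, Nat.add_sub_cancel_left]
                rfl
              exact h5
            have e3 : (A ++ x :: y :: w).eraseIdx (k : ℕ) = A ++ x :: y :: w.eraseIdx d := by
              rw [hd, List.eraseIdx_append_of_length_le (by omega), Nat.add_sub_cancel_left]
              rfl
            have e4 : (A ++ y :: x :: w).eraseIdx ((Fin.cast hT k : Fin _) : ℕ)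
                = A ++ y :: x :: w.eraseIdx d := by
              rw [show ((Fin.cast hT k : Fin _) : ℕ) = (k : ℕ) from rfl]
              rw [hd, List.eraseIdx_append_of_length_le (by omega), Nat.add_sub_cancel_left]
              rfl
            have hih := ih A x y (w.eraseIdx d) (by
              simp only [List.length_append, List.length_eraseIdx, List.length_cons] at hlen ⊢
              rw [if_pos hdw]
              omega)
            rw [e1, e2, e3, e4, hkv, hih]
            ring

lemma pfL_swap_mid (hz : zᵀ = -z) (u : List (Fin n)) (x y : Fin n) (w : List (Fin n)) :
    pfL z (u ++ x :: y :: w) = - pfL z (u ++ y :: x :: w) :=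
  pfL_swap_mid_aux z hz _ u x y w (le_refl _)

lemma pfL_move_front (hz : zᵀ = -z) (u : List (Fin n)) (a : Fin n) (w : List (Fin n)) :
    pfL z (u ++ a :: w) = (-1 : R) ^ u.length * pfL z (a :: (u ++ w)) := by
  induction u using List.reverseRecOn generalizing w with
  | nil => simp
  | append_singleton u' c ihu =>
    have h1 : (u' ++ [c]) ++ a :: w = u' ++ c :: a :: w := by simp
    have h2 : (u' ++ [c]) ++ w = u' ++ c :: w := by simp
    rw [h1, h2, pfL_swap_mid z hz u' c a w, ihu (c :: w)]
    simp only [List.length_append, List.length_cons, List.length_nil]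
    ring
end Swap2

section Bridge
variable {R : Type*} [CommRing R] {n : ℕ} (z : Matrix (Fin n) (Fin n) R)

lemma erase_get_of_nodup {α : Type*} [DecidableEq α] :
    ∀ (l : List α), l.Nodup → ∀ (k : ℕ) (hk : k < l.length), l.erase (l[k]) = l.eraseIdx k := by
  intro l
  induction l with
  | nil => intro _ k hk; simp at hk
  | cons a t ih =>
    intro hnd k hk
    cases k with
    | zero => simp [List.erase_cons_head]
    | succ k' =>
      have hk' : k' < t.length := by simpa using hk
      have hmem : t[k'] ∈ t := List.getElem_mem hk'
      have hna : a ∉ t := (List.nodup_cons.mp hnd).1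
      have hne : ¬ (a == t[k']) = true := by
        simp only [beq_iff_eq]
        intro h
        exact hna (h ▸ hmem)
      rw [show (a::t)[k'+1] = t[k'] from rfl, List.erase_cons_tail hne,
        List.eraseIdx_cons_succ, ih (List.nodup_cons.mp hnd).2 k' hk']

lemma sort_erase (B : Finset (Fin n)) (a : Fin n) :
    (B.erase a).sort (·≤·) = (B.sort (·≤·)).erase a := by
  refine List.Perm.eq_of_pairwise' (Finset.pairwise_sort _ _)
    (List.Pairwise.sublist List.erase_sublist (Finset.pairwise_sort _ _)) ?_
  rw [← Multiset.coe_eq_coe]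
  rw [show ((((B.sort (·≤·)).erase a : List (Fin n))) : Multiset (Fin n))
      = ((B.sort (·≤·) : List (Fin n)) : Multiset (Fin n)).erase a from (Multiset.coe_erase _ _).symm]
  rw [Finset.sort_eq, Finset.sort_eq, Finset.erase_val]

lemma pfB_eq (B : Finset (Fin n)) (m : ℕ) (h : B.card = m) (f : Fin m → Fin n)
    (hmem : ∀ i, f i ∈ B) (hmono : StrictMono f) :
    pf (z.submatrix f f) = pfB z B := by
  subst h
  rw [show f = ⇑(B.orderEmbOfFin rfl) from Finset.orderEmbOfFin_unique rfl hmem hmono]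
  rfl

end Bridge

section Bridge2
variable {R : Type*} [CommRing R] {n : ℕ} (z : Matrix (Fin n) (Fin n) R)

lemma pfB_eq_pfL_aux (N : ℕ) : ∀ B : Finset (Fin n), B.card ≤ N → Even B.card →
    pfB z B = pfL z (B.sort (·≤·)) := by
  induction N with
  | zero =>
    intro B hB _
    have hB0 : B = ∅ := Finset.card_eq_zero.mp (by omega)
    subst hB0
    rw [Finset.sort_empty, pfL_nil, pfB]
    exact pf_fin_zero _
  | succ N ih =>
    intro B hB hEven
    have hE2 : B.card % 2 = 0 := Nat.even_iff.mp hEven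
    rcases Nat.eq_zero_or_pos B.card with h0 | hpos
    · have hB0 : B = ∅ := Finset.card_eq_zero.mp h0
      subst hB0
      rw [Finset.sort_empty, pfL_nil, pfB]
      exact pf_fin_zero _
    · obtain ⟨m, hm⟩ : ∃ m, B.card = m + 2 := ⟨B.card - 2, by omega⟩
      have hmEven : Even m := Nat.even_iff.mpr (by omega)
      set f := B.orderEmbOfFin hm with hfdef
      have hBf : pfB z B = pf (z.submatrix f f) :=
        (pfB_eq z B (m+2) hm f (fun i => Finset.orderEmbOfFin_mem B hm i) f.strictMono).symm
      rw [hBf, pf_expand m hmEven]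
      rcases hsort : B.sort (·≤·) with _ | ⟨b0, tl⟩
      · exfalso
        have := Finset.length_sort (α := Fin n) (·≤·) (s := B)
        rw [hsort] at this
        simp at this
        omega
      have hlen : tl.length = m + 1 := by
        have := Finset.length_sort (α := Fin n) (·≤·) (s := B)
        rw [hsort] at this
        simp at this
        omega
      have htl : m + 1 = tl.length := hlen.symm
      rw [pfL_cons, ← Fin.sum_congr' _ htl]
      refine Finset.sum_congr rfl fun k _ => ?_
      have hk1 : (k:ℕ) + 1 < m + 2 := by have := k.isLt; omega
      have hb0 : f ⟨0, by omega⟩ = b0 := by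
        rw [hfdef, Finset.orderEmbOfFin_apply]
        simp only [hsort]
        rfl
      have hfk : f ⟨(k:ℕ)+1, hk1⟩ = tl.get (Fin.cast htl k) := by
        rw [hfdef, Finset.orderEmbOfFin_apply]
        simp only [hsort]
        rfl
      -- the submatrix piece
      have hsub : (z.submatrix f f).submatrix (gemb m k) (gemb m k)
          = z.submatrix (⇑f ∘ gemb m k) (⇑f ∘ gemb m k) := by
        rw [Matrix.submatrix_submatrix]
      set B' := (B.erase (f ⟨0, by omega⟩)).erase (f ⟨(k:ℕ)+1, hk1⟩) with hB'def
      have hmem0 : f ⟨0, by omega⟩ ∈ B := Finset.orderEmbOfFin_mem B hm _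
      have hmemk : f ⟨(k:ℕ)+1, hk1⟩ ∈ B := Finset.orderEmbOfFin_mem B hm _
      have hne0k : f ⟨(k:ℕ)+1, hk1⟩ ≠ f ⟨0, by omega⟩ := by
        intro h
        have := f.injective h
        have := congrArg Fin.val this
        simp at this
      have hcard' : B'.card = m := by
        rw [hB'def, Finset.card_erase_of_mem (Finset.mem_erase.mpr ⟨hne0k, hmemk⟩),
          Finset.card_erase_of_mem hmem0, hm]
        omega
      have hmem' : ∀ i : Fin m, (⇑f ∘ gemb m k) i ∈ B' := by
        intro i
        rw [hB'def]
        refine Finset.mem_erase.mpr ⟨?_, Finset.mem_erase.mpr ⟨?_, Finset.orderEmbOfFin_mem B hm _⟩⟩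
        · intro h
          have := f.injective h
          have := congrArg Fin.val this
          simp at this
          exact gemb_val_ne_succ m k i this
        · intro h
          have h' := f.injective h
          have h2 := gemb_val_ne_zero m k i
          rw [h'] at h2
          simp at h2
      have hmono' : StrictMono (⇑f ∘ gemb m k) := f.strictMono.comp (gemb_strictMono m k)
      have hpf' : pf ((z.submatrix f f).submatrix (gemb m k) (gemb m k)) = pfB z B' := by
        rw [hsub]
        exact pfB_eq z B' m hcard' _ hmem' hmono'
      -- sorted list of B'
      have hsort' : B'.sort (·≤·) = tl.eraseIdx (k : ℕ) := by
        rw [hB'def, sort_erase, sort_erase, hsort, hb0, List.erase_cons_head, hfk]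
        have : tl.get (Fin.cast htl k) = tl[(k:ℕ)] := rfl
        rw [this, erase_get_of_nodup tl ?nd (k:ℕ) (by omega)]
        case nd =>
          have h1 := Finset.sort_nodup B (·≤·)
          rw [hsort] at h1
          exact (List.nodup_cons.mp h1).2
      have hih : pfB z B' = pfL z (B'.sort (·≤·)) := by
        refine ih B' (by omega) ?_
        rw [hcard']
        exact hmEven
      rw [hpf', hih, hsort', Matrix.submatrix_apply, hb0, hfk]
      have hcv : ((Fin.cast htl k : Fin tl.length) : ℕ) = (k : ℕ) := rfl
      rw [hcv]

lemma pfB_eq_pfL (B : Finset (Fin n)) (hEven : Even B.card) :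
    pfB z B = pfL z (B.sort (·≤·)) :=
  pfB_eq_pfL_aux z B.card B (le_refl _) hEven

end Bridge2

section Insert
open Matrix
variable {R : Type*} [CommRing R] {n : ℕ} (z : Matrix (Fin n) (Fin n) R)

lemma takeWhile_eq_filter_of_sorted {l : List (Fin n)} (hl : List.Pairwise (·≤·) l) (a : Fin n) :
    l.takeWhile (fun b => decide (b < a)) = l.filter (fun b => decide (b < a)) := by
  induction l with
  | nil => rfl
  | cons b t ih =>
    by_cases hb : b < a
    · rw [List.takeWhile_cons_of_pos (by simpa using hb), List.filter_cons_of_pos (by simpa using hb)]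
      rw [ih hl.of_cons]
    · rw [List.takeWhile_cons_of_neg (by simpa using hb), List.filter_cons_of_neg (by simpa using hb)]
      symm
      rw [List.filter_eq_nil_iff]
      intro y hy
      have hby : b ≤ y := (List.pairwise_cons.mp hl).1 y hy
      simp only [decide_eq_true_eq]
      intro hya
      exact hb (lt_of_le_of_lt hby hya)

lemma insSign_mul_pfB (hz : zᵀ = -z) (a : Fin n) (S : Finset (Fin n)) (ha : a ∉ S)
    (hS : Odd S.card) :
    insSign a S * pfB z (insert a S) = pfL z (a :: S.sort (·≤·)) := by
  have hcard : (insert a S).card = S.card + 1 := Finset.card_insert_of_notMem ha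
  have hEven : Even (insert a S).card := by
    rw [hcard, Nat.even_iff]
    rw [Nat.odd_iff] at hS
    omega
  rw [pfB_eq_pfL z _ hEven]
  have hpred : (fun b : Fin n => decide ¬a ≤ b) = (fun b : Fin n => decide (b < a)) :=
    funext fun b => decide_eq_decide.mpr not_le
  have hsort1 : (insert a S).sort (·≤·) =
      ((S.sort (·≤·)).takeWhile (fun b => decide (b < a))) ++
        a :: ((S.sort (·≤·)).dropWhile (fun b => decide (b < a))) := by
    have h1 : (insert a S).sort (·≤·) = (S.sort (·≤·)).orderedInsert (·≤·) a := by
      refine List.Perm.eq_of_pairwise' (Finset.pairwise_sort _ _)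
        (List.Pairwise.orderedInsert a _ (Finset.pairwise_sort _ _)) ?_
      have h2 : ((insert a S).sort (·≤·) : Multiset (Fin n)) = ↑(a :: S.sort (·≤·)) := by
        rw [Finset.sort_eq, show ((↑(a :: S.sort (·≤·)) : Multiset (Fin n))) = a ::ₘ ↑(S.sort (·≤·)) from rfl,
          Finset.insert_val_of_notMem ha, Finset.sort_eq]
      exact (Multiset.coe_eq_coe.mp h2).trans (List.perm_orderedInsert _ a _).symm
    rw [h1, List.orderedInsert_eq_take_drop, hpred]
  rw [hsort1, pfL_move_front z hz, List.takeWhile_append_dropWhile]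
  have hlen : ((S.sort (·≤·)).takeWhile (fun b => decide (b < a))).length
      = (S.filter (fun x => x < a)).card := by
    rw [takeWhile_eq_filter_of_sorted (Finset.pairwise_sort _ _) a]
    have hval : ((S.filter (fun x => x < a)).val)
        = ↑(List.filter (fun b => decide (b < a)) (S.sort (·≤·))) := by
      rw [Finset.filter_val, ← Finset.sort_eq S (·≤·), Multiset.filter_coe]
    rw [Finset.card_def, hval, Multiset.coe_card]
  rw [hlen, insSign, ← mul_assoc, ← pow_add, Even.neg_one_pow ⟨_, rfl⟩, one_mul]

end Insert

section Final
open Matrix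
variable {R : Type*} [CommRing R] {n : ℕ} (z : Matrix (Fin n) (Fin n) R)

theorem stmt1' (hz : zᵀ = -z) (σ τ : Finset (Fin n)) (hσ : Odd σ.card) (hτ : Odd τ.card)
    (hdisj : Disjoint σ τ) :
    (∑ i : Fin τ.card,
      (-1 : R) ^ (i.val + 1) *
        (insSign (τ.orderEmbOfFin rfl i) σ * pfB z (insert (τ.orderEmbOfFin rfl i) σ)) *
        pfB z (τ.erase (τ.orderEmbOfFin rfl i)))
    + (∑ j : Fin σ.card,
      (-1 : R) ^ (j.val + 1) * pfB z (σ.erase (σ.orderEmbOfFin rfl j)) *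
        (insSign (σ.orderEmbOfFin rfl j) τ * pfB z (insert (σ.orderEmbOfFin rfl j) τ))) = 0 := by
  have hcs : σ.card = (σ.sort (·≤·)).length := (Finset.length_sort _).symm
  have hct : τ.card = (τ.sort (·≤·)).length := (Finset.length_sort _).symm
  have hgetσ : ∀ j : Fin σ.card, σ.orderEmbOfFin rfl j = (σ.sort (·≤·)).get (Fin.cast hcs j) :=
    fun j => Finset.orderEmbOfFin_apply σ rfl j
  have hgetτ : ∀ i : Fin τ.card, τ.orderEmbOfFin rfl i = (τ.sort (·≤·)).get (Fin.cast hct i) :=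
    fun i => Finset.orderEmbOfFin_apply τ rfl i
  -- erased pfaffians
  have hP : ∀ j : Fin σ.card, pfL z ((σ.sort (·≤·)).eraseIdx (j:ℕ))
      = pfB z (σ.erase (σ.orderEmbOfFin rfl j)) := by
    intro j
    have hmem : σ.orderEmbOfFin rfl j ∈ σ := Finset.orderEmbOfFin_mem σ rfl j
    have hEe : Even (σ.erase (σ.orderEmbOfFin rfl j)).card := by
      rw [Finset.card_erase_of_mem hmem, Nat.even_iff]
      rw [Nat.odd_iff] at hσ
      have : 1 ≤ σ.card := by omega
      omega
    rw [pfB_eq_pfL z _ hEe, sort_erase, hgetσ j,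
      show (σ.sort (·≤·)).get (Fin.cast hcs j) = (σ.sort (·≤·))[(j:ℕ)]'(by have := j.isLt; omega) from rfl,
      erase_get_of_nodup _ (Finset.sort_nodup _ _) (j:ℕ) (by have := j.isLt; omega)]
  have hQ : ∀ i : Fin τ.card, pfL z ((τ.sort (·≤·)).eraseIdx (i:ℕ))
      = pfB z (τ.erase (τ.orderEmbOfFin rfl i)) := by
    intro i
    have hmem : τ.orderEmbOfFin rfl i ∈ τ := Finset.orderEmbOfFin_mem τ rfl i
    have hEe : Even (τ.erase (τ.orderEmbOfFin rfl i)).card := by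
      rw [Finset.card_erase_of_mem hmem, Nat.even_iff]
      rw [Nat.odd_iff] at hτ
      have : 1 ≤ τ.card := by omega
      omega
    rw [pfB_eq_pfL z _ hEe, sort_erase, hgetτ i,
      show (τ.sort (·≤·)).get (Fin.cast hct i) = (τ.sort (·≤·))[(i:ℕ)]'(by have := i.isLt; omega) from rfl,
      erase_get_of_nodup _ (Finset.sort_nodup _ _) (i:ℕ) (by have := i.isLt; omega)]
  -- expansion of inserted pfaffians
  have hExpτ : ∀ i : Fin τ.card,
      insSign (τ.orderEmbOfFin rfl i) σ * pfB z (insert (τ.orderEmbOfFin rfl i) σ)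
      = ∑ j : Fin σ.card, (-1:R)^(j:ℕ) * z (τ.orderEmbOfFin rfl i) (σ.orderEmbOfFin rfl j) *
          pfB z (σ.erase (σ.orderEmbOfFin rfl j)) := by
    intro i
    have hnotmem : τ.orderEmbOfFin rfl i ∉ σ :=
      Finset.disjoint_right.mp hdisj (Finset.orderEmbOfFin_mem τ rfl i)
    rw [insSign_mul_pfB z hz _ σ hnotmem hσ, pfL_cons, ← Fin.sum_congr' _ hcs]
    refine Finset.sum_congr rfl fun j _ => ?_
    rw [← hgetσ j, ← hP j]
    rfl
  have hExpσ : ∀ j : Fin σ.card,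
      insSign (σ.orderEmbOfFin rfl j) τ * pfB z (insert (σ.orderEmbOfFin rfl j) τ)
      = ∑ i : Fin τ.card, (-1:R)^(i:ℕ) * z (σ.orderEmbOfFin rfl j) (τ.orderEmbOfFin rfl i) *
          pfB z (τ.erase (τ.orderEmbOfFin rfl i)) := by
    intro j
    have hnotmem : σ.orderEmbOfFin rfl j ∉ τ :=
      Finset.disjoint_left.mp hdisj (Finset.orderEmbOfFin_mem σ rfl j)
    rw [insSign_mul_pfB z hz _ τ hnotmem hτ, pfL_cons, ← Fin.sum_congr' _ hct]
    refine Finset.sum_congr rfl fun i _ => ?_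
    rw [← hgetτ i, ← hQ i]
    rfl
  have h1 : (∑ i : Fin τ.card,
      (-1 : R) ^ (i.val + 1) *
        (insSign (τ.orderEmbOfFin rfl i) σ * pfB z (insert (τ.orderEmbOfFin rfl i) σ)) *
        pfB z (τ.erase (τ.orderEmbOfFin rfl i)))
      = ∑ i : Fin τ.card, ∑ j : Fin σ.card,
        (-1:R)^(i.val+1) * ((-1:R)^(j:ℕ) * z (τ.orderEmbOfFin rfl i) (σ.orderEmbOfFin rfl j) *
          pfB z (σ.erase (σ.orderEmbOfFin rfl j))) * pfB z (τ.erase (τ.orderEmbOfFin rfl i)) := by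
    refine Finset.sum_congr rfl fun i _ => ?_
    rw [hExpτ i, Finset.mul_sum, Finset.sum_mul]
  have h2 : (∑ j : Fin σ.card,
      (-1 : R) ^ (j.val + 1) * pfB z (σ.erase (σ.orderEmbOfFin rfl j)) *
        (insSign (σ.orderEmbOfFin rfl j) τ * pfB z (insert (σ.orderEmbOfFin rfl j) τ)))
      = ∑ i : Fin τ.card, ∑ j : Fin σ.card,
        (-1:R)^(j.val+1) * pfB z (σ.erase (σ.orderEmbOfFin rfl j)) *
          ((-1:R)^(i:ℕ) * z (σ.orderEmbOfFin rfl j) (τ.orderEmbOfFin rfl i) *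
            pfB z (τ.erase (τ.orderEmbOfFin rfl i))) := by
    rw [Finset.sum_comm]
    refine Finset.sum_congr rfl fun j _ => ?_
    rw [hExpσ j, Finset.mul_sum]
  rw [h1, h2, ← Finset.sum_add_distrib]
  refine Finset.sum_eq_zero fun i _ => ?_
  rw [← Finset.sum_add_distrib]
  refine Finset.sum_eq_zero fun j _ => ?_
  rw [skew_apply z hz (τ.orderEmbOfFin rfl i) (σ.orderEmbOfFin rfl j)]
  ring

end Final


/-- Wick's theorem / quadratic Grassmann–Plücker relation for Pfaffians:
for a skew-symmetric matrix `z` over a commutative ring and disjoint odd-cardinality index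
sets `σ = {σ_1 < … < σ_r}` and `τ = {τ_1 < … < τ_s}`, one has
`Σ_i (-1)^i Pf_{{τ_i}∪σ} Pf_{τ∖{τ_i}} + Σ_j (-1)^j Pf_{σ∖{σ_j}} Pf_{{σ_j}∪τ} = 0`,
where the Pfaffians on sorted index sets carry the reordering signs. -/
theorem stmt1 {R : Type*} [CommRing R] (n : ℕ) (z : Matrix (Fin n) (Fin n) R)
    (hz : zᵀ = -z) (σ τ : Finset (Fin n)) (hσ : Odd σ.card) (hτ : Odd τ.card)
    (hdisj : Disjoint σ τ) :
    (∑ i : Fin τ.card,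
      (-1 : R) ^ (i.val + 1) *
        (insSign (τ.orderEmbOfFin rfl i) σ * pfB z (insert (τ.orderEmbOfFin rfl i) σ)) *
        pfB z (τ.erase (τ.orderEmbOfFin rfl i)))
    + (∑ j : Fin σ.card,
      (-1 : R) ^ (j.val + 1) * pfB z (σ.erase (σ.orderEmbOfFin rfl j)) *
        (insSign (σ.orderEmbOfFin rfl j) τ * pfB z (insert (σ.orderEmbOfFin rfl j) τ))) = 0 := by
  exact stmt1' z hz σ τ hσ hτ hdisj
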